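/- For any two distinct greedy words c, d of length n, the length of the intersection I_c ∩ I_d belongs to the set {0, 1/φ^{n+1}, 1/φⁿ, 1/φ^{n-1}}. -/

import Mathlib

noncomputable def phi : ℝ := (1 + Real.sqrt 5) / 2

/-- Value of a binary word in base φ. -/
noncomputable def val {n : ℕ} (c : Fin n → Fin 2) : ℝ :=
  ∑ i : Fin n, (c i : ℕ) / phi ^ ((i : ℕ) + 1)

/-- A binary word avoids the factor `011`. -/
def Greedy {n : ℕ} (c : Fin n → Fin 2) : Prop :=
  ∀ i j k : Fin n, (j : ℕ) = (i : ℕ) + 1 → (k : ℕ) = (i : ℕ) + 2 →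
    ¬ (c i = 0 ∧ c j = 1 ∧ c k = 1)

/-- The interval `I_c = [v(c), v(c) + 1/φ^(n-1)]`. -/
noncomputable def I {n : ℕ} (c : Fin n → Fin 2) : Set ℝ :=
  Set.Icc (val c) (val c + 1 / phi ^ (n - 1))

lemma one_lt_phi : (1:ℝ) < phi := by
  have h5 : (2:ℝ) < Real.sqrt 5 := by
    have := Real.sq_sqrt (by norm_num : (0:ℝ) ≤ 5)
    nlinarith [Real.sqrt_nonneg 5]
  simp only [phi]; linarith

lemma phi_pos : (0:ℝ) < phi := lt_trans one_pos one_lt_phi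

lemma phi_sq : phi^2 = phi + 1 := by
  have := Real.sq_sqrt (by norm_num : (0:ℝ) ≤ 5)
  simp only [phi]; nlinarith

lemma phi_le_two : phi ≤ 2 := by
  have h5 : Real.sqrt 5 ≤ 3 := by
    have := Real.sqrt_le_sqrt (by norm_num : (5:ℝ) ≤ 9)
    have h9 : Real.sqrt 9 = 3 := by
      rw [show (9:ℝ) = 3^2 by norm_num, Real.sqrt_sq]; norm_num
    linarith
  simp only [phi]; linarith

lemma pow_phi_pos (k : ℕ) : (0:ℝ) < phi ^ k := pow_pos phi_pos k

lemma key (k : ℕ) : 1/phi^k = 1/phi^(k+1) + 1/phi^(k+2) := by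
  rw [div_add_div _ _ (ne_of_gt (pow_phi_pos _)) (ne_of_gt (pow_phi_pos _)),
    div_eq_div_iff (ne_of_gt (pow_phi_pos _)) (mul_ne_zero (ne_of_gt (pow_phi_pos _)) (ne_of_gt (pow_phi_pos _)))]
  linear_combination (phi^(2*k)*phi) * phi_sq

noncomputable def val' (n : ℕ) (e : ℕ → Fin 2) : ℝ :=
  ∑ j ∈ Finset.range n, (e j : ℕ) / phi ^ (j+1)

def G (n : ℕ) (e : ℕ → Fin 2) : Prop :=
  ∀ i, i + 2 < n → ¬(e i = 0 ∧ e (i+1) = 1 ∧ e (i+2) = 1)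

lemma val'_nonneg (n : ℕ) (e : ℕ → Fin 2) : 0 ≤ val' n e := by
  apply Finset.sum_nonneg
  intro j _
  have := pow_phi_pos (j+1)
  positivity

lemma val'_shift (n : ℕ) (e : ℕ → Fin 2) :
    val' (n+1) e = (e 0 : ℕ)/phi + (1/phi) * val' n (fun j => e (j+1)) := by
  rw [val', Finset.sum_range_succ', val', Finset.mul_sum]
  have h0 : ((e 0 : ℕ):ℝ) / phi ^ (0+1) = (e 0 : ℕ)/phi := by norm_num
  rw [h0, add_comm]
  congr 1
  apply Finset.sum_congr rfl
  intro j _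
  have hp := phi_pos
  have hq := pow_phi_pos (j+1)
  rw [pow_succ]
  ring

lemma phi_eq : phi = 1 + 1/phi := by
  have hp := phi_pos
  have h := phi_sq
  field_simp
  nlinarith

lemma val'_le (n : ℕ) (e : ℕ → Fin 2) : val' n e ≤ phi - phi / phi ^ n := by
  induction n generalizing e with
  | zero => simp [val']
  | succ m ih =>
    rw [val'_shift]
    have h1 : ((e 0 : ℕ) : ℝ) ≤ 1 := by
      have : (e 0 : ℕ) ≤ 1 := by omega
      exact_mod_cast this
    have h2 := ih (fun j => e (j+1))
    have hp := phi_pos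
    have hq := pow_phi_pos m
    have hq1 := pow_phi_pos (m+1)
    have step1 : ((e 0:ℕ):ℝ)/phi ≤ 1/phi := by gcongr
    have step2 : (1/phi) * val' m (fun j => e (j+1)) ≤ (1/phi)*(phi - phi/phi^m) := by
      apply mul_le_mul_of_nonneg_left h2 (by positivity)
    have eqn : 1/phi + (1/phi)*(phi - phi/phi^m) = phi - phi/phi^(m+1) := by
      rw [pow_succ]
      field_simp
      linear_combination (-(phi^m)) * phi_sq
    linarith

lemma fin2 (x : Fin 2) : x = 0 ∨ x = 1 := by fin_cases x <;> simp

lemma inv_pow_add (s t : ℕ) : 1/phi^s * (1/phi^t) = 1/phi^(s+t) := by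
  rw [pow_add]; ring

lemma scale_id (t : ℕ) : 1/phi^2 + (1/phi^2) * (1/phi^1 - 1/phi^t) = 1/phi^1 - 1/phi^(t+2) := by
  rw [mul_sub, inv_pow_add 2 1, inv_pow_add 2 t]
  have hk := key 1
  have hc : (2:ℕ)+t = t+2 := by omega
  rw [hc]
  norm_num at hk ⊢
  linarith

lemma lemM : ∀ n : ℕ, ∀ e : ℕ → Fin 2, G (n+1) e → e 0 = 0 →
    val' (n+1) e ≤ 1/phi - 1/phi^n ∨ val' (n+1) e = 1/phi - 1/phi^(n+1) ∨
      val' (n+1) e = 1/phi - 1/phi^(n+2) := by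
  intro n
  induction n using Nat.strong_induction_on with
  | _ n ih =>
  intro e hG h0
  have hp := phi_pos
  match n with
  | 0 =>
    right; left
    rw [val'_shift, h0]
    simp [val']
  | Nat.succ m =>
    have hsh : val' (m+2) e = (1/phi) * ((e 1:ℕ)/phi + (1/phi) * val' m (fun j => e (j+2))) := by
      rw [val'_shift, h0, val'_shift]
      norm_num
    rcases fin2 (e 1) with h1 | h1
    · -- e 1 = 0 : crude bound
      left
      show val' (m+2) e ≤ 1/phi - 1/phi^(m+1)
      rw [hsh, h1]
      have hb := val'_le m (fun j => e (j+2))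
      have hq := pow_phi_pos m
      have heq : (1/phi) * ((0:ℝ)/phi + (1/phi) * (phi - phi/phi^m)) = 1/phi - 1/phi^(m+1) := by
        field_simp
        ring
      have hmul : (1/phi) * ((((0:Fin 2):ℕ):ℝ)/phi + (1/phi) * val' m (fun j => e (j+2)))
          ≤ (1/phi) * ((0:ℝ)/phi + (1/phi) * (phi - phi/phi^m)) := by
        have h2 : (0:ℝ) ≤ 1/phi := by positivity
        push_cast
        gcongr
        simp
      exact hmul.trans_eq heq
    · -- e 1 = 1
      match m with
      | 0 =>
        right; right
        show val' 2 e = 1/phi - 1/phi^3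
        rw [hsh, h1]
        have h00 : val' 0 (fun j => e (j+2)) = 0 := by simp [val']
        rw [h00]
        have hco : ((((1:Fin 2)):ℕ):ℝ) = 1 := by norm_num
        have heq2 : (1:ℝ)/phi * ((((1:Fin 2)):ℕ)/phi + 1/phi * 0) = 1/phi^2 := by
          rw [hco]; ring
        rw [heq2]
        have k1 := key 1
        simp only [one_div] at k1 ⊢
        norm_num at k1 ⊢
        linarith
      | Nat.succ k =>
        have h2 : e 2 = 0 := by
          rcases fin2 (e 2) with h | h
          · exact h
          · exact absurd ⟨h0, h1, h⟩ (hG 0 (by omega))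
        have hG2 : G (k+1) (fun j => e (j+2)) := by
          intro i hi
          exact hG (i+2) (by omega)
        have hV := ih k (by omega) (fun j => e (j+2)) hG2 h2
        have hco : ((((1:Fin 2)):ℕ):ℝ) = 1 := by norm_num
        have hsh3 : val' (k+3) e = (1/phi) * ((e 1:ℕ)/phi + (1/phi) * val' (k+1) (fun j => e (j+2))) := hsh
        rw [h1, hco] at hsh3
        have hval : val' (k+3) e = 1/phi^2 + (1/phi^2) * val' (k+1) (fun j => e (j+2)) := by
          rw [hsh3]; ring
        have hq2 : (0:ℝ) < 1/phi^2 := by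
          have := pow_phi_pos 2; positivity
        rcases hV with hV | hV | hV
        · left
          show val' (k+3) e ≤ 1/phi - 1/phi^(k+2)
          rw [hval]
          have hs := scale_id k
          have hm : (1/phi^2) * val' (k+1) (fun j => e (j+2)) ≤ (1/phi^2) * (1/phi^1 - 1/phi^k) := by
            apply mul_le_mul_of_nonneg_left _ hq2.le
            norm_num at hV ⊢
            linarith
          norm_num at hs hm ⊢
          linarith
        · right; left
          show val' (k+3) e = 1/phi - 1/phi^(k+3)
          rw [hval, hV]
          have hs := scale_id (k+1)
          norm_num at hs ⊢
          linarith
        · right; right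
          show val' (k+3) e = 1/phi - 1/phi^(k+4)
          rw [hval, hV]
          have hs := scale_id (k+2)
          norm_num at hs ⊢
          linarith

lemma val'_zero_or_ge (n : ℕ) (e : ℕ → Fin 2) :
    val' n e = 0 ∨ 1/phi^n ≤ val' n e := by
  by_cases h : ∀ j < n, e j = 0
  · left
    apply Finset.sum_eq_zero
    intro j hj
    rw [h j (Finset.mem_range.mp hj)]
    simp
  · right
    push_neg at h
    obtain ⟨j, hj, hje⟩ := h
    have hje1 : e j = 1 := by rcases fin2 (e j) with h' | h' <;> tauto
    have hpow : phi^(j+1) ≤ phi^n := pow_le_pow_right₀ one_lt_phi.le hj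
    have hterm : 1/phi^n ≤ (e j : ℕ)/phi^(j+1) := by
      rw [hje1, Fin.val_one]
      push_cast
      exact one_div_le_one_div_of_le (pow_phi_pos (j+1)) hpow
    calc 1/phi^n ≤ (e j : ℕ)/phi^(j+1) := hterm
      _ ≤ val' n e := by
          apply Finset.single_le_sum (f := fun i => ((e i : ℕ):ℝ)/phi^(i+1))
          · intro i _
            have := pow_phi_pos (i+1)
            positivity
          · exact Finset.mem_range.mpr hj

lemma lemSL (n : ℕ) (c d : ℕ → Fin 2) (hGc : G (n+1) c) (hGd : G (n+1) d)
    (hc0 : c 0 = 1) (hd0 : d 0 = 0) :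
    val' (n+1) c - val' (n+1) d = 1/phi^(n+1) ∨
    val' (n+1) c - val' (n+1) d = 1/phi^(n+2) ∨
    1/phi^n ≤ val' (n+1) c - val' (n+1) d := by
  have hp := phi_pos
  have hvc : val' (n+1) c = 1/phi + (1/phi) * val' n (fun j => c (j+1)) := by
    rw [val'_shift, hc0, Fin.val_one]
    norm_num
  have hA0 : 0 ≤ (1/phi) * val' n (fun j => c (j+1)) := by
    have := val'_nonneg n (fun j => c (j+1))
    positivity
  have hAcases := val'_zero_or_ge n (fun j => c (j+1))
  have hB := lemM n d hGd hd0
  have hkn := key n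
  have h2n : 1/phi^n ≤ 2*(1/phi^(n+1)) := by
    have heq : 2*(1/phi^(n+1)) - 1/phi^n = (2 - phi)/phi^(n+1) := by
      rw [pow_succ]
      field_simp
    have hnn : 0 ≤ (2 - phi)/phi^(n+1) :=
      div_nonneg (by linarith [phi_le_two]) (pow_phi_pos _).le
    linarith
  have hA1 : (1/phi) * (1/phi^n) = 1/phi^(n+1) := by
    rw [pow_succ]; ring
  rcases hB with hB | hB | hB
  · right; right
    rw [hvc]
    linarith
  · rcases hAcases with hA | hA
    · left
      rw [hvc, hA, hB]
      ring
    · right; right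
      rw [hvc]
      have : 1/phi^(n+1) ≤ (1/phi) * val' n (fun j => c (j+1)) := by
        rw [← hA1]
        apply mul_le_mul_of_nonneg_left hA (by positivity)
      linarith
  · rcases hAcases with hA | hA
    · right; left
      rw [hvc, hA, hB]
      ring
    · right; right
      rw [hvc]
      have : 1/phi^(n+1) ≤ (1/phi) * val' n (fun j => c (j+1)) := by
        rw [← hA1]
        apply mul_le_mul_of_nonneg_left hA (by positivity)
      linarith

lemma lemSL_abs (n : ℕ) (c d : ℕ → Fin 2) (hGc : G (n+1) c) (hGd : G (n+1) d)
    (hc0 : c 0 = 1) (hd0 : d 0 = 0) :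
    |val' (n+1) c - val' (n+1) d| = 1/phi^(n+2) ∨
    |val' (n+1) c - val' (n+1) d| = 1/phi^(n+1) ∨
    1/phi^n ≤ |val' (n+1) c - val' (n+1) d| := by
  rcases lemSL n c d hGc hGd hc0 hd0 with h | h | h
  · right; left
    rw [h, abs_of_pos (one_div_pos.mpr (pow_phi_pos _))]
  · left
    rw [h, abs_of_pos (one_div_pos.mpr (pow_phi_pos _))]
  · right; right
    exact h.trans (le_abs_self _)

lemma main : ∀ n : ℕ, ∀ c d : ℕ → Fin 2, G (n+1) c → G (n+1) d →
    val' (n+1) c - val' (n+1) d = 0 ∨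
    |val' (n+1) c - val' (n+1) d| = 1/phi^(n+2) ∨
    |val' (n+1) c - val' (n+1) d| = 1/phi^(n+1) ∨
    1/phi^n ≤ |val' (n+1) c - val' (n+1) d| := by
  intro n
  induction n with
  | zero =>
    intro c d hGc hGd
    rcases fin2 (c 0) with hc0 | hc0 <;> rcases fin2 (d 0) with hd0 | hd0
    · left
      have : val' 1 c = val' 1 d := by
        rw [val'_shift, val'_shift, hc0, hd0]
        simp [val']
      rw [this]; ring
    · rcases lemSL_abs 0 d c hGd hGc hd0 hc0 with h | h | h
      · right; left; rwa [abs_sub_comm]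
      · right; right; left; rwa [abs_sub_comm]
      · right; right; right; rwa [abs_sub_comm]
    · exact Or.inr (lemSL_abs 0 c d hGc hGd hc0 hd0)
    · left
      have : val' 1 c = val' 1 d := by
        rw [val'_shift, val'_shift, hc0, hd0]
        simp [val']
      rw [this]; ring
  | succ m ih =>
    intro c d hGc hGd
    have hp := phi_pos
    have hGc' : G (m+1) (fun j => c (j+1)) := fun i hi => hGc (i+1) (by omega)
    have hGd' : G (m+1) (fun j => d (j+1)) := fun i hi => hGd (i+1) (by omega)
    rcases fin2 (c 0) with hc0 | hc0 <;> rcases fin2 (d 0) with hd0 | hd0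
    case inl.inr =>
      rcases lemSL_abs (m+1) d c hGd hGc hd0 hc0 with h | h | h
      · right; left; rwa [abs_sub_comm]
      · right; right; left; rwa [abs_sub_comm]
      · right; right; right; rwa [abs_sub_comm]
    case inr.inl =>
      exact Or.inr (lemSL_abs (m+1) c d hGc hGd hc0 hd0)
    all_goals {
      have hsame : ((c 0 : ℕ):ℝ) = ((d 0 : ℕ):ℝ) := by rw [hc0, hd0]
      have hD : val' (m+2) c - val' (m+2) d
          = (1/phi) * (val' (m+1) (fun j => c (j+1)) - val' (m+1) (fun j => d (j+1))) := by
        have e1 : val' (m+2) c = ((c 0:ℕ):ℝ)/phi + (1/phi) * val' (m+1) (fun j => c (j+1)) :=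
          val'_shift _ _
        have e2 : val' (m+2) d = ((d 0:ℕ):ℝ)/phi + (1/phi) * val' (m+1) (fun j => d (j+1)) :=
          val'_shift _ _
        rw [e1, e2, hsame]
        ring
      have habs : |val' (m+2) c - val' (m+2) d|
          = (1/phi) * |val' (m+1) (fun j => c (j+1)) - val' (m+1) (fun j => d (j+1))| := by
        rw [hD, abs_mul, abs_of_pos (by positivity)]
      rcases ih (fun j => c (j+1)) (fun j => d (j+1)) hGc' hGd' with h | h | h | h
      · left; rw [hD, h]; ring
      · right; left
        rw [habs, h, pow_succ (n := m+2)]  -- 1/phi * 1/phi^(m+2) = 1/phi^(m+3)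
        ring
      · right; right; left
        rw [habs, h, pow_succ (n := m+1)]
        ring
      · right; right; right
        rw [habs]
        have : (1/phi) * (1/phi^m) = 1/phi^(m+1) := by rw [pow_succ]; ring
        rw [← this]
        apply mul_le_mul_of_nonneg_left h (by positivity)
    }

def eN {n : ℕ} (c : Fin n → Fin 2) : ℕ → Fin 2 :=
  fun j => if h : j < n then c ⟨j, h⟩ else 0

lemma val_eq {n : ℕ} (c : Fin n → Fin 2) : val c = val' n (eN c) := by
  rw [val, val', ← Fin.sum_univ_eq_sum_range (fun j => ((eN c j : ℕ):ℝ)/phi^(j+1)) n]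
  apply Finset.sum_congr rfl
  intro i _
  have : eN c (i : ℕ) = c i := by
    rw [eN]
    rw [dif_pos i.isLt]
  rw [this]

lemma greedy_eq {n : ℕ} (c : Fin n → Fin 2) (hc : Greedy c) : G n (eN c) := by
  intro i hi ⟨h0, h1, h2⟩
  have hi0 : i < n := by omega
  have hi1 : i + 1 < n := by omega
  have hi2 : i + 2 < n := by omega
  apply hc ⟨i, hi0⟩ ⟨i+1, hi1⟩ ⟨i+2, hi2⟩ rfl rfl
  refine ⟨?_, ?_, ?_⟩
  · rw [← h0, eN, dif_pos hi0]
  · rw [← h1, eN, dif_pos hi1]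
  · rw [← h2, eN, dif_pos hi2]

theorem intersection_lengths {n : ℕ} (hn : 1 ≤ n) (c d : Fin n → Fin 2)
    (hc : Greedy c) (hd : Greedy d) (hcd : c ≠ d) :
    (MeasureTheory.volume (I c ∩ I d)).toReal ∈
      ({0, 1 / phi ^ (n + 1), 1 / phi ^ n, 1 / phi ^ (n - 1)} : Set ℝ) := by
  obtain ⟨m, rfl⟩ : ∃ m, n = m + 1 := ⟨n - 1, by omega⟩
  have hm : m + 1 - 1 = m := by omega
  set a := val c with ha
  set b := val d with hb
  set L : ℝ := 1 / phi ^ m with hL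
  have hLpos : 0 < L := one_div_pos.mpr (pow_phi_pos m)
  have hI : I c ∩ I d = Set.Icc (a ⊔ b) ((a + L) ⊓ (b + L)) := by
    rw [I, I, Set.Icc_inter_Icc, hm]
  have hvol : (MeasureTheory.volume (I c ∩ I d)).toReal
      = (ENNReal.ofReal ((a + L) ⊓ (b + L) - a ⊔ b)).toReal := by
    rw [hI, Real.volume_Icc]
  have hx : (a + L) ⊓ (b + L) - a ⊔ b = L - |a - b| := by
    rcases le_total a b with h | h
    · rw [abs_of_nonpos (by linarith), sup_eq_right.mpr h, inf_eq_left.mpr (by linarith)]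
      ring
    · rw [abs_of_nonneg (by linarith), sup_eq_left.mpr h, inf_eq_right.mpr (by linarith)]
      ring
  have hab : a - b = val' (m+1) (eN c) - val' (m+1) (eN d) := by
    rw [ha, hb, val_eq, val_eq]
  have hkey := key m
  simp only [Set.mem_insert_iff, Set.mem_singleton_iff]
  rcases main m (eN c) (eN d) (greedy_eq c hc) (greedy_eq d hd) with h | h | h | h
  · -- equal values: length L
    right; right; right
    rw [hvol, hx, hab, h]
    simp only [abs_zero, sub_zero]
    rw [ENNReal.toReal_ofReal hLpos.le, hL, hm]
  · -- |D| = 1/phi^(m+2) : length 1/phi^(m+1) = 1/phi^n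
    right; right; left
    rw [hvol, hx, hab, h]
    have hval : L - 1/phi^(m+2) = 1/phi^(m+1) := by rw [hL]; linarith
    rw [hval, ENNReal.toReal_ofReal (one_div_pos.mpr (pow_phi_pos _)).le]
  · -- |D| = 1/phi^(m+1) : length 1/phi^(m+2)
    right; left
    rw [hvol, hx, hab, h]
    have hval : L - 1/phi^(m+1) = 1/phi^(m+2) := by rw [hL]; linarith
    rw [hval, ENNReal.toReal_ofReal (one_div_pos.mpr (pow_phi_pos _)).le]
  · -- |D| ≥ L : length 0
    left
    rw [hvol, hx, hab]
    have : L - |val' (m+1) (eN c) - val' (m+1) (eN d)| ≤ 0 := by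
      rw [hL]; linarith
    rw [ENNReal.ofReal_eq_zero.mpr this]
    simp
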